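/- Let S be a real symmetric g×g matrix, let w ∈ ℝ^g, let E be the g×g identity matrix, and let e := (1,1,…,1) ∈ ℝ^g. Then there exists L_0 > 0 such that for every real L > L_0 the matrix L·E + S is positive definite and Θ((L/2)e + w; L·E + S) = min_{r ∈ {0,1}^g} [ (1/2)⟨r, S r⟩ − ⟨r, w⟩ ]. In particular, lim_{L → +∞} Θ((L/2)e + w; L·E + S) exists and equals min_{r ∈ {0,1}^g} [ (1/2)⟨r, S r⟩ − ⟨r, w⟩ ]. -/

import Mathlib

open scoped BigOperators

/-- The tropical theta function `Θ(z; B) = min_{m ∈ ℤ^g} [(1/2)⟨m, B m⟩ + ⟨m, z⟩]`,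
defined as an infimum. -/
noncomputable def tropTheta (g : ℕ) (B : Matrix (Fin g) (Fin g) ℝ) (z : Fin g → ℝ) : ℝ :=
  sInf {x : ℝ | ∃ m : Fin g → ℤ,
    x = (1/2) * ∑ i, (m i : ℝ) * (∑ j, B i j * (m j : ℝ)) + ∑ i, (m i : ℝ) * z i}

lemma int_abs_le_sq' (n : ℤ) : |(n : ℝ)| ≤ (n : ℝ)^2 := by
  rcases eq_or_ne n 0 with h | h
  · simp [h]
  · have h1 : (1 : ℝ) ≤ |(n : ℝ)| := by
      have := Int.one_le_abs h
      calc (1:ℝ) = ((1:ℤ):ℝ) := by norm_num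
        _ ≤ ((|n| : ℤ) : ℝ) := by exact_mod_cast this
        _ = |(n:ℝ)| := by push_cast; ring
    nlinarith [sq_abs (n:ℝ), abs_nonneg (n:ℝ)]

lemma int_one_le_sq' {n : ℤ} (h : n ≠ 0) : (1 : ℝ) ≤ (n : ℝ)^2 := by
  have := Int.one_le_abs h
  have h2 : (1:ℝ) ≤ |(n:ℝ)| := by
    calc (1:ℝ) = ((1:ℤ):ℝ) := by norm_num
      _ ≤ ((|n| : ℤ) : ℝ) := by exact_mod_cast this
      _ = |(n:ℝ)| := by push_cast; ring
  nlinarith [sq_abs (n:ℝ), abs_nonneg (n:ℝ)]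

lemma coord_nonneg' (n : ℤ) : 0 ≤ (n:ℝ)^2 + (n:ℝ) - (max ((n:ℝ)^2 - 1) 0)/4 := by
  rcases eq_or_ne n 0 with h | h
  · simp [h]
  · have h1 := int_one_le_sq' h
    rw [max_eq_left (by linarith)]
    rcases le_or_gt 1 (n:ℝ) with h2 | h2
    · nlinarith
    · have h3 : (n:ℝ) ≤ -1 := by
        have hn : n ≤ -1 := by
          rcases lt_or_ge n 0 with hn | hn
          · omega
          · exfalso
            have hr : (1:ℝ) ≤ (n:ℝ) := by
              have : 1 ≤ n := by omega
              exact_mod_cast this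
            linarith
        exact_mod_cast hn
      nlinarith [sq_nonneg ((n:ℝ)+1)]

lemma coord_bad' (n : ℤ) (h0 : n ≠ 0) (h1 : n ≠ -1) :
    1 ≤ (n:ℝ)^2 + (n:ℝ) - (max ((n:ℝ)^2 - 1) 0)/4 := by
  have hsq := int_one_le_sq' h0
  rw [max_eq_left (by linarith)]
  have : 1 ≤ n ∨ n ≤ -2 := by omega
  rcases this with h | h
  · have h' : (1:ℝ) ≤ (n:ℝ) := by exact_mod_cast h
    nlinarith [sq_nonneg ((n:ℝ)-1)]
  · have h' : (n:ℝ) ≤ -2 := by exact_mod_cast h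
    nlinarith [sq_nonneg ((n:ℝ)+2)]

lemma quad_lower' (g : ℕ) (S : Matrix (Fin g) (Fin g) ℝ) (v : Fin g → ℝ) :
    -((∑ i, ∑ j, |S i j|) * ∑ i, (v i)^2) ≤ ∑ i, v i * ∑ j, S i j * v j := by
  set Q := ∑ i, (v i)^2 with hQ
  have hQ0 : 0 ≤ Q := Finset.sum_nonneg fun i _ => sq_nonneg _
  have hQi : ∀ i, (v i)^2 ≤ Q := fun i =>
    Finset.single_le_sum (fun j _ => sq_nonneg (v j)) (Finset.mem_univ i)
  have habs : ∀ i j, |v i * v j| ≤ Q := by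
    intro i j
    have h2 : (v i * v j)^2 ≤ Q^2 := by nlinarith [hQi i, hQi j, sq_nonneg (v i), sq_nonneg (v j)]
    nlinarith [abs_nonneg (v i * v j), sq_abs (v i * v j)]
  calc -((∑ i, ∑ j, |S i j|) * Q) = ∑ i, ∑ j, -(|S i j| * Q) := by
        rw [Finset.sum_mul]
        simp [Finset.sum_mul, Finset.sum_neg_distrib]
    _ ≤ ∑ i, ∑ j, v i * (S i j * v j) := by
        refine Finset.sum_le_sum fun i _ => Finset.sum_le_sum fun j _ => ?_
        have h3 : |v i * (S i j * v j)| ≤ |S i j| * Q := by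
          have : |v i * (S i j * v j)| = |S i j| * |v i * v j| := by
            rw [abs_mul, abs_mul, abs_mul]; ring
          rw [this]
          exact mul_le_mul_of_nonneg_left (habs i j) (abs_nonneg _)
        linarith [neg_abs_le (v i * (S i j * v j))]
    _ = ∑ i, v i * ∑ j, S i j * v j := by
        refine Finset.sum_congr rfl fun i _ => ?_
        rw [Finset.mul_sum]

lemma expand_aux' (g : ℕ) (L : ℝ) (S : Matrix (Fin g) (Fin g) ℝ) (w : Fin g → ℝ)
    (m : Fin g → ℤ) :
    (1/2) * ∑ i, (m i : ℝ) * (∑ j, (L • (1 : Matrix (Fin g) (Fin g) ℝ) + S) i j * (m j : ℝ))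
      + ∑ i, (m i : ℝ) * (((L/2) • (fun _ => (1 : ℝ)) + w : Fin g → ℝ) i)
    = (L/2) * (∑ i, ((m i : ℝ)^2 + (m i : ℝ)))
      + ((1/2) * ∑ i, (m i : ℝ) * ∑ j, S i j * (m j : ℝ) + ∑ i, (m i : ℝ) * w i) := by
  have h1 : ∀ i, ∑ j, (L • (1 : Matrix (Fin g) (Fin g) ℝ) + S) i j * (m j : ℝ)
      = L * (m i : ℝ) + ∑ j, S i j * (m j : ℝ) := by
    intro i
    simp [Matrix.add_apply, Matrix.smul_apply, Matrix.one_apply, add_mul, ite_mul,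
      Finset.sum_add_distrib, Finset.sum_ite_eq, smul_eq_mul]
  simp only [h1, Pi.add_apply, Pi.smul_apply, smul_eq_mul, mul_one]
  rw [Finset.mul_sum, Finset.mul_sum, Finset.mul_sum, ← Finset.sum_add_distrib,
    ← Finset.sum_add_distrib, ← Finset.sum_add_distrib]
  exact Finset.sum_congr rfl fun i _ => by ring

/-- value at a 0/1 vector with sign flipped -/
lemma good_val' (g : ℕ) (L : ℝ) (S : Matrix (Fin g) (Fin g) ℝ) (w : Fin g → ℝ)
    (m : Fin g → ℤ) (hm : ∀ i, m i = 0 ∨ m i = -1) :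
    (L/2) * (∑ i, ((m i : ℝ)^2 + (m i : ℝ)))
      + ((1/2) * ∑ i, (m i : ℝ) * ∑ j, S i j * (m j : ℝ) + ∑ i, (m i : ℝ) * w i)
    = (1/2) * ∑ i, ((-(m i) : ℤ) : ℝ) * ∑ j, S i j * ((-(m j) : ℤ) : ℝ)
      - ∑ i, ((-(m i) : ℤ) : ℝ) * w i := by
  have hA : ∑ i, ((m i : ℝ)^2 + (m i : ℝ)) = 0 :=
    Finset.sum_eq_zero fun i _ => by rcases hm i with h | h <;> simp [h]
  have hc : ∀ i : Fin g, ((-(m i) : ℤ) : ℝ) = -(m i : ℝ) := fun i => by push_cast; ring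
  simp only [hc, hA, mul_zero, zero_add, mul_neg, neg_mul, neg_neg,
    Finset.sum_neg_distrib, sub_neg_eq_add]

/-- for a real symmetric `g×g` matrix `S` and `w ∈ ℝ^g` there is `L₀ > 0`
such that for all `L > L₀` the matrix `L·E + S` is positive definite and
`Θ((L/2)e + w; L·E + S) = min_{r ∈ {0,1}^g} [(1/2)⟨r,S r⟩ - ⟨r,w⟩]`;
in particular `Θ((L/2)e + w; L·E + S)` tends to that minimum as `L → +∞`. -/
theorem stmt11 (g : ℕ) (S : Matrix (Fin g) (Fin g) ℝ) (hS : S.IsSymm)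
    (w : Fin g → ℝ) :
    ∃ M : ℝ,
      IsLeast {y : ℝ | ∃ r : Fin g → ℤ, (∀ i, r i = 0 ∨ r i = 1) ∧
          y = (1/2) * ∑ i, (r i : ℝ) * (∑ j, S i j * (r j : ℝ)) - ∑ i, (r i : ℝ) * w i} M ∧
      (∃ L₀ : ℝ, 0 < L₀ ∧ ∀ L : ℝ, L > L₀ →
        (L • (1 : Matrix (Fin g) (Fin g) ℝ) + S).PosDef ∧
        tropTheta g (L • (1 : Matrix (Fin g) (Fin g) ℝ) + S)
          ((L/2) • (fun _ => (1 : ℝ)) + w) = M) ∧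
      Filter.Tendsto
        (fun L : ℝ => tropTheta g (L • (1 : Matrix (Fin g) (Fin g) ℝ) + S)
          ((L/2) • (fun _ => (1 : ℝ)) + w))
        Filter.atTop (nhds M) := by
  classical
  set C := ∑ i, ∑ j, |S i j| with hCdef
  set D := ∑ i, |w i| with hDdef
  have hC0 : 0 ≤ C := Finset.sum_nonneg fun i _ => Finset.sum_nonneg fun j _ => abs_nonneg _
  have hD0 : 0 ≤ D := Finset.sum_nonneg fun i _ => abs_nonneg _
  set Fb : (Fin g → Bool) → ℝ := fun b =>
    (1/2) * ∑ i, ((if b i then (1:ℤ) else 0 : ℤ) : ℝ) *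
        (∑ j, S i j * ((if b j then (1:ℤ) else 0 : ℤ) : ℝ))
      - ∑ i, ((if b i then (1:ℤ) else 0 : ℤ) : ℝ) * w i with hFbdef
  have hne : (Finset.image Fb Finset.univ).Nonempty :=
    ⟨Fb fun _ => false, Finset.mem_image_of_mem _ (Finset.mem_univ _)⟩
  set M := (Finset.image Fb Finset.univ).min' hne with hMdef
  -- M belongs to the 0/1 minimization set
  have hMS : ∃ r : Fin g → ℤ, (∀ i, r i = 0 ∨ r i = 1) ∧
      M = (1/2) * ∑ i, (r i : ℝ) * (∑ j, S i j * (r j : ℝ)) - ∑ i, (r i : ℝ) * w i := by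
    obtain ⟨b, -, hb⟩ := Finset.mem_image.mp ((Finset.image Fb Finset.univ).min'_mem hne)
    refine ⟨fun i => if b i then 1 else 0, fun i => by by_cases h : b i <;> simp [h], ?_⟩
    rw [hMdef, ← hb, hFbdef]
  -- M is a lower bound for the 0/1 minimization set
  have hSlb : ∀ y : ℝ, (∃ r : Fin g → ℤ, (∀ i, r i = 0 ∨ r i = 1) ∧
      y = (1/2) * ∑ i, (r i : ℝ) * (∑ j, S i j * (r j : ℝ)) - ∑ i, (r i : ℝ) * w i) → M ≤ y := by
    rintro y ⟨r, hr, hy⟩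
    have hpt : ∀ i : Fin g, ((if (decide (r i = 1) : Bool) then (1:ℤ) else 0 : ℤ) : ℝ)
        = (r i : ℝ) := by
      intro i
      rcases hr i with h | h <;> simp [h]
    have hFy : Fb (fun i => decide (r i = 1)) = y := by
      rw [hFbdef, hy]
      simp only [hpt]
    rw [hMdef, ← hFy]
    exact Finset.min'_le _ _ (Finset.mem_image_of_mem _ (Finset.mem_univ _))
  set L₀ : ℝ := 4*C + 8*D + C*(g:ℝ) + 2*D*(g:ℝ) + 2*|M| + 1 with hL₀def
  have hCg : 0 ≤ C*(g:ℝ) := mul_nonneg hC0 (Nat.cast_nonneg g)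
  have hDg : 0 ≤ D*(g:ℝ) := mul_nonneg hD0 (Nat.cast_nonneg g)
  have hL₀pos : 0 < L₀ := by
    have := abs_nonneg M
    rw [hL₀def]; linarith
  have key : ∀ L : ℝ, L > L₀ →
      (L • (1 : Matrix (Fin g) (Fin g) ℝ) + S).PosDef ∧
      tropTheta g (L • (1 : Matrix (Fin g) (Fin g) ℝ) + S)
        ((L/2) • (fun _ => (1 : ℝ)) + w) = M := by
    intro L hL
    have hLpos : 0 < L := lt_trans hL₀pos hL
    have hLC : C < L := by rw [hL₀def] at hL; linarith [abs_nonneg M]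
    have hrow : ∀ v : Fin g → ℝ, ∀ i,
        ∑ j, (L • (1 : Matrix (Fin g) (Fin g) ℝ) + S) i j * v j
        = L * v i + ∑ j, S i j * v j := by
      intro v i
      simp [Matrix.add_apply, Matrix.smul_apply, Matrix.one_apply, add_mul, ite_mul,
        Finset.sum_add_distrib, Finset.sum_ite_eq, smul_eq_mul]
    constructor
    · -- positive definiteness
      refine Matrix.posDef_iff_dotProduct_mulVec.mpr ⟨?_, ?_⟩
      · ext i j
        simp only [Matrix.conjTranspose_apply, Matrix.add_apply, Matrix.smul_apply,
          Matrix.one_apply, smul_eq_mul, star_trivial, hS.apply i j]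
        by_cases h : i = j <;> simp [h, eq_comm]
      · intro x hx
        have hx2 : 0 < ∑ i, (x i)^2 := by
          obtain ⟨i, hi⟩ := Function.ne_iff.mp hx
          refine Finset.sum_pos' (fun j _ => sq_nonneg _)
            ⟨i, Finset.mem_univ i, sq_pos_iff.mpr hi⟩
        have hkey : dotProduct (star x)
              ((L • (1 : Matrix (Fin g) (Fin g) ℝ) + S).mulVec x)
            = L * ∑ i, (x i)^2 + ∑ i, x i * ∑ j, S i j * x j := by
          simp only [star_trivial, dotProduct, Matrix.mulVec, hrow]
          rw [Finset.mul_sum, ← Finset.sum_add_distrib]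
          exact Finset.sum_congr rfl fun i _ => by ring
        have hq := quad_lower' g S x
        have hprod : 0 < (L - C) * ∑ i, (x i)^2 := mul_pos (by linarith) hx2
        show 0 < dotProduct (star x)
          ((L • (1 : Matrix (Fin g) (Fin g) ℝ) + S).mulVec x)
        rw [hkey]
        nlinarith [hq, hprod]
    · -- value of the tropical theta function
      rw [tropTheta]
      refine IsLeast.csInf_eq ⟨?_, ?_⟩
      · -- M is attained
        obtain ⟨r, hr, hMr⟩ := hMS
        refine ⟨fun i => -(r i), ?_⟩
        have hm : ∀ i, -(r i) = 0 ∨ -(r i) = -1 := fun i => by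
          rcases hr i with h | h <;> simp [h]
        rw [expand_aux' g L S w, good_val' g L S w _ hm]
        simp only [neg_neg]
        exact hMr
      · -- M is a lower bound
        rintro x ⟨m, hxm⟩
        rw [expand_aux' g L S w] at hxm
        by_cases hall : ∀ i, m i = 0 ∨ m i = -1
        · rw [good_val' g L S w m hall] at hxm
          refine hSlb x ⟨fun i => -(m i), fun i => ?_, hxm⟩
          rcases hall i with h | h
          · left; simp [h]
          · right; simp [h]
        · push_neg at hall
          obtain ⟨i₀, h0, h1⟩ := hall
          set Q := ∑ i, ((m i : ℝ))^2 with hQdef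
          set T := ∑ i, max (((m i : ℝ))^2 - 1) 0 with hTdef
          have hQ0 : 0 ≤ Q := Finset.sum_nonneg fun i _ => sq_nonneg _
          have hT0 : 0 ≤ T := Finset.sum_nonneg fun i _ => le_max_right _ _
          have hQi : ∀ i, ((m i : ℝ))^2 ≤ Q := fun i =>
            Finset.single_le_sum (fun j _ => sq_nonneg ((m j : ℝ))) (Finset.mem_univ i)
          have hQT : Q ≤ T + (g : ℝ) := by
            have h2 : Q ≤ ∑ i, (max (((m i : ℝ))^2 - 1) 0 + 1) := by
              refine Finset.sum_le_sum fun i _ => ?_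
              have := le_max_left (((m i : ℝ))^2 - 1) 0
              linarith
            rw [Finset.sum_add_distrib] at h2
            simpa using h2
          have hA : 1 + T/4 ≤ ∑ i, (((m i : ℝ))^2 + (m i : ℝ)) := by
            have hsum : ∑ i, (((m i : ℝ))^2 + (m i : ℝ) - (max (((m i : ℝ))^2 - 1) 0)/4)
                = (∑ i, (((m i : ℝ))^2 + (m i : ℝ))) - T/4 := by
              rw [Finset.sum_sub_distrib, hTdef, Finset.sum_div]
            have h1' : (1 : ℝ) ≤ ∑ i, (((m i : ℝ))^2 + (m i : ℝ)
                - (max (((m i : ℝ))^2 - 1) 0)/4) :=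
              le_trans (coord_bad' (m i₀) h0 h1)
                (Finset.single_le_sum (fun i _ => coord_nonneg' (m i)) (Finset.mem_univ i₀))
            linarith
          have hP : -(C*Q) ≤ ∑ i, (m i : ℝ) * ∑ j, S i j * (m j : ℝ) := by
            have := quad_lower' g S (fun i => (m i : ℝ))
            simpa [← hCdef, ← hQdef] using this
          have hW : -(D*Q) ≤ ∑ i, (m i : ℝ) * w i := by
            have step : ∀ i : Fin g, -(|w i| * Q) ≤ (m i : ℝ) * w i := by
              intro i
              have habs : |(m i : ℝ) * w i| ≤ |w i| * Q := by
                rw [abs_mul]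
                nlinarith [int_abs_le_sq' (m i), hQi i, abs_nonneg (w i),
                  abs_nonneg ((m i : ℝ))]
              linarith [neg_abs_le ((m i : ℝ) * w i)]
            calc -(D*Q) = ∑ i, -(|w i| * Q) := by
                  rw [hDdef, Finset.sum_mul, Finset.sum_neg_distrib]
              _ ≤ ∑ i, (m i : ℝ) * w i := Finset.sum_le_sum fun i _ => step i
          have e1 : (L/2) * (1 + T/4) ≤ (L/2) * ∑ i, (((m i : ℝ))^2 + (m i : ℝ)) :=
            mul_le_mul_of_nonneg_left hA (by linarith)
          have e2 : 0 ≤ (L/8 - (C/2 + D)) * T := by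
            refine mul_nonneg ?_ hT0
            rw [hL₀def] at hL
            linarith [abs_nonneg M]
          have e3 : 0 ≤ (C/2 + D) * (T + (g:ℝ) - Q) :=
            mul_nonneg (by linarith) (by linarith)
          have habsM := le_abs_self M
          rw [hL₀def] at hL
          rw [hxm]
          nlinarith [e1, e2, e3, hP, hW]
  refine ⟨M, ⟨hMS, fun y hy => hSlb y hy⟩, ⟨L₀, hL₀pos, key⟩, ?_⟩
  have hev : (fun L : ℝ => tropTheta g (L • (1 : Matrix (Fin g) (Fin g) ℝ) + S)
      ((L/2) • (fun _ => (1 : ℝ)) + w)) =ᶠ[Filter.atTop] fun _ => M :=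
    Filter.eventually_atTop.2 ⟨L₀ + 1, fun L hL => (key L (by linarith)).2⟩
  exact Filter.Tendsto.congr' hev.symm tendsto_const_nhds
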